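/- Let Y be a circularly ordered set, q : X → Y a surjective map, and for each y ∈ Y let ≤_y be a linear order on the fiber q⁻¹(y). Define a ternary relation R on X by: R x₁ x₂ x₃ iff one of the following holds: (1) sbtw (q x₁) (q x₂) (q x₃); (2) q x₁ = q x₂ ≠ q x₃ and x₁ <_y x₂ where y = q x₁; (3) q x₂ = q x₃ ≠ q x₁ and x₂ <_y x₃ where y = q x₂; (4) q x₁ = q x₃ ≠ q x₂ and x₃ <_y x₁ where y = q x₁; (5) q x₁ = q x₂ = q x₃ = y and either x₁ <_y x₂ <_y x₃, or x₂ <_y x₃ <_y x₁, or x₃ <_y x₁ <_y x₂. Then R is a circular order on X, i.e., it satisfies cyclicity (R a b c → R b c a), asymmetry (R a b c → ¬ R b a c), transitivity (R a b c and R a c d imply R a b d), and totality (for pairwise distinct a, b, c: R a b c or R a c b); moreover the map q is circular-order preserving: whenever R x₁ x₂ x₃ and q x₁, q x₂, q x₃ are pairwise distinct, sbtw (q x₁) (q x₂) (q x₃) holds, and each fiber q⁻¹(y) is R-convex. -/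
import Mathlib


/-- The closed interval `{x | R a x b} ∪ {a, b}` of a ternary relation `R`. -/
def ternIcc {X : Type*} (R : X → X → X → Prop) (a b : X) : Set X :=
  {x | R a x b} ∪ {a, b}

/-- A subset `S` is convex for a ternary relation `R` if for all `a, b ∈ S` at least one of
the intervals `[a,b]`, `[b,a]` is contained in `S`. -/
def TernConvex {X : Type*} (R : X → X → X → Prop) (S : Set X) : Prop :=
  ∀ a ∈ S, ∀ b ∈ S, ternIcc R a b ⊆ S ∨ ternIcc R b a ⊆ S

/-- Cyclic ternary relation induced by a strict linear order. -/
def cyc3 {X : Type*} (lt : X → X → Prop) (a b c : X) : Prop :=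
  (lt a b ∧ lt b c) ∨ (lt b c ∧ lt c a) ∨ (lt c a ∧ lt a b)

lemma cyc3_cyclic {X : Type*} {lt : X → X → Prop} {a b c : X}
    (h : cyc3 lt a b c) : cyc3 lt b c a := by
  unfold cyc3 at *; tauto

lemma cyc3_asymm {X : Type*} {lt : X → X → Prop}
    (na : ∀ x y, lt x y → lt y x → False) {a b c : X}
    (h : cyc3 lt a b c) (h' : cyc3 lt b a c) : False := by
  rcases h with ⟨h1, h2⟩ | ⟨h1, h2⟩ | ⟨h1, h2⟩ <;>
    rcases h' with ⟨g1, g2⟩ | ⟨g1, g2⟩ | ⟨g1, g2⟩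
  exacts [na _ _ h1 g1, na _ _ h2 g2, na _ _ h1 g2,
          na _ _ h2 g2, na _ _ h1 g2, na _ _ h1 g1,
          na _ _ h2 g1, na _ _ h1 g1, na _ _ h2 g2]

lemma cyc3_trans {X : Type*} {lt : X → X → Prop}
    (na : ∀ x y, lt x y → lt y x → False)
    (htr : ∀ x y z, lt x y → lt y z → lt x z) {a b c d : X}
    (h : cyc3 lt a b c) (h' : cyc3 lt a c d) : cyc3 lt a b d := by
  rcases h with ⟨h1, h2⟩ | ⟨h1, h2⟩ | ⟨h1, h2⟩ <;>
    rcases h' with ⟨g1, g2⟩ | ⟨g1, g2⟩ | ⟨g1, g2⟩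
  exacts [Or.inl ⟨h1, htr _ _ _ h2 g2⟩,
          Or.inr (Or.inl ⟨htr _ _ _ h2 g1, g2⟩),
          Or.inr (Or.inr ⟨g1, h1⟩),
          absurd g1 (fun g => na _ _ h2 g),
          Or.inr (Or.inl ⟨htr _ _ _ h1 g1, g2⟩),
          absurd g2 (fun g => na _ _ h2 g),
          absurd g1 (fun g => na _ _ h1 g),
          Or.inr (Or.inr ⟨g2, h2⟩),
          absurd g2 (fun g => na _ _ h1 g)]

/-- Let `Y` be a circularly ordered set, `q : X → Y` surjective, and `lt` a
strict linear order on each fiber of `q`. Then the lexicographic-type ternary relation `R` on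
`X` (defined case-by-case from `sbtw` on `Y` and `lt` on the fibers) is a circular order:
cyclic, asymmetric, transitive and total on pairwise distinct triples; moreover `q` is
circular-order preserving and every fiber of `q` is `R`-convex. -/
theorem fibered_circular_order
    {X Y : Type*} [CircularOrder Y] (q : X → Y) (hq : Function.Surjective q)
    (lt : X → X → Prop)
    (hfib : ∀ x₁ x₂ : X, lt x₁ x₂ → q x₁ = q x₂)
    (hirr : ∀ x : X, ¬ lt x x)
    (hlttrans : ∀ x y z : X, lt x y → lt y z → lt x z)
    (hlttotal : ∀ x₁ x₂ : X, q x₁ = q x₂ → x₁ = x₂ ∨ lt x₁ x₂ ∨ lt x₂ x₁)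
    (R : X → X → X → Prop)
    (hR : ∀ x₁ x₂ x₃ : X, R x₁ x₂ x₃ ↔
      (sbtw (q x₁) (q x₂) (q x₃) ∨
        (q x₁ = q x₂ ∧ q x₂ ≠ q x₃ ∧ lt x₁ x₂) ∨
        (q x₂ = q x₃ ∧ q x₃ ≠ q x₁ ∧ lt x₂ x₃) ∨
        (q x₁ = q x₃ ∧ q x₁ ≠ q x₂ ∧ lt x₃ x₁) ∨
        (q x₁ = q x₂ ∧ q x₂ = q x₃ ∧
          ((lt x₁ x₂ ∧ lt x₂ x₃) ∨ (lt x₂ x₃ ∧ lt x₃ x₁) ∨ (lt x₃ x₁ ∧ lt x₁ x₂))))) :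
    (∀ a b c : X, R a b c → R b c a) ∧
    (∀ a b c : X, R a b c → ¬ R b a c) ∧
    (∀ a b c d : X, R a b c → R a c d → R a b d) ∧
    (∀ a b c : X, a ≠ b → b ≠ c → c ≠ a → R a b c ∨ R a c b) ∧
    (∀ x₁ x₂ x₃ : X, R x₁ x₂ x₃ → q x₁ ≠ q x₂ → q x₂ ≠ q x₃ → q x₃ ≠ q x₁ →
      sbtw (q x₁) (q x₂) (q x₃)) ∧
    (∀ y : Y, TernConvex R (q ⁻¹' {y})) := by
  have na : ∀ x y : X, lt x y → lt y x → False :=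
    fun x y h h' => hirr x (hlttrans x y x h h')
  -- characterization lemmas by equality pattern
  have hA : ∀ a b c : X, q a = q b → q b ≠ q c → (R a b c ↔ lt a b) := by
    intro a b c hab hbc
    rw [hR]
    constructor
    · rintro (h | ⟨_, _, h⟩ | ⟨h1, _, _⟩ | ⟨h1, _, _⟩ | ⟨_, h2, _⟩)
      · rw [hab] at h; exact absurd h sbtw_irrefl_left
      · exact h
      · exact absurd h1 hbc
      · exact absurd (hab.symm.trans h1) hbc
      · exact absurd h2 hbc
    · exact fun h => Or.inr (Or.inl ⟨hab, hbc, h⟩)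
  have hB : ∀ a b c : X, q b = q c → q a ≠ q b → (R a b c ↔ lt b c) := by
    intro a b c hbc hab
    rw [hR]
    constructor
    · rintro (h | ⟨h1, _, _⟩ | ⟨_, _, h⟩ | ⟨h1, _, _⟩ | ⟨h1, _, _⟩)
      · rw [hbc] at h; exact absurd h sbtw_irrefl_right
      · exact absurd h1 hab
      · exact h
      · exact absurd (h1.trans hbc.symm) hab
      · exact absurd h1 hab
    · exact fun h => Or.inr (Or.inr (Or.inl ⟨hbc, fun h' => hab (hbc.trans h').symm, h⟩))
  have hC : ∀ a b c : X, q a = q c → q a ≠ q b → (R a b c ↔ lt c a) := by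
    intro a b c hac hab
    rw [hR]
    constructor
    · rintro (h | ⟨h1, _, _⟩ | ⟨_, h2, _⟩ | ⟨_, _, h⟩ | ⟨h1, _, _⟩)
      · rw [← hac] at h; exact absurd h sbtw_irrefl_left_right
      · exact absurd h1 hab
      · exact absurd hac.symm h2
      · exact h
      · exact absurd h1 hab
    · exact fun h => Or.inr (Or.inr (Or.inr (Or.inl ⟨hac, hab, h⟩)))
  have hD : ∀ a b c : X, q a = q b → q b = q c → (R a b c ↔ cyc3 lt a b c) := by
    intro a b c hab hbc
    rw [hR]
    constructor
    · rintro (h | ⟨_, h2, _⟩ | ⟨_, h2, _⟩ | ⟨_, h2, _⟩ | ⟨_, _, h⟩)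
      · rw [hab, hbc] at h; exact absurd h (sbtw_irrefl _)
      · exact absurd hbc h2
      · exact absurd (hab.trans hbc).symm h2
      · exact absurd hab h2
      · exact h
    · exact fun h => Or.inr (Or.inr (Or.inr (Or.inr ⟨hab, hbc, h⟩)))
  have hE : ∀ a b c : X, q a ≠ q b → q b ≠ q c → q a ≠ q c →
      (R a b c ↔ sbtw (q a) (q b) (q c)) := by
    intro a b c hab hbc hac
    rw [hR]
    constructor
    · rintro (h | ⟨h1, _, _⟩ | ⟨h1, _, _⟩ | ⟨h1, _, _⟩ | ⟨h1, _, _⟩)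
      · exact h
      · exact absurd h1 hab
      · exact absurd h1 hbc
      · exact absurd h1 hac
      · exact absurd h1 hab
    · exact Or.inl
  refine ⟨?_, ?_, ?_, ?_, ?_, ?_⟩
  · -- cyclicity
    intro a b c h
    by_cases hab : q a = q b
    · by_cases hbc : q b = q c
      · rw [hD a b c hab hbc] at h
        rw [hD b c a hbc (hab.trans hbc).symm]
        exact cyc3_cyclic h
      · rw [hA a b c hab hbc] at h
        rw [hC b c a hab.symm hbc]
        exact h
    · by_cases hbc : q b = q c
      · rw [hB a b c hbc hab] at h
        rw [hA b c a hbc (fun h' => hab (h'.symm.trans hbc.symm))]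
        exact h
      · by_cases hac : q a = q c
        · rw [hC a b c hac hab] at h
          rw [hB b c a hac.symm (fun h' => hab (hac.trans h'.symm))]
          exact h
        · rw [hE a b c hab hbc hac] at h
          rw [hE b c a hbc (fun h' => hac h'.symm) (fun h' => hab h'.symm)]
          exact h.cyclic_left
  · -- asymmetry
    intro a b c h h'
    by_cases hab : q a = q b
    · by_cases hbc : q b = q c
      · rw [hD a b c hab hbc] at h
        rw [hD b a c hab.symm (hab.trans hbc)] at h'
        exact cyc3_asymm na h h'
      · rw [hA a b c hab hbc] at h
        rw [hA b a c hab.symm (fun h' => hbc (hab.symm.trans h'))] at h'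
        exact na _ _ h h'
    · by_cases hbc : q b = q c
      · rw [hB a b c hbc hab] at h
        rw [hC b a c hbc (fun h' => hab h'.symm)] at h'
        exact na _ _ h h'
      · by_cases hac : q a = q c
        · rw [hC a b c hac hab] at h
          rw [hB b a c hac (fun h' => hab h'.symm)] at h'
          exact na _ _ h h'
        · rw [hE a b c hab hbc hac] at h
          rw [hE b a c (fun h' => hab h'.symm) hac hbc] at h'
          exact sbtw_asymm h h'.cyclic_left.cyclic_left
  · -- transitivity
    intro a b c d h1 h2
    by_cases hab : q a = q b
    · by_cases hbc : q b = q c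
      · have habc := hab.trans hbc
        by_cases had : q a = q d
        · rw [hD a b c hab hbc] at h1
          rw [hD a c d habc (habc.symm.trans had)] at h2
          rw [hD a b d hab (hab.symm.trans had)]
          exact cyc3_trans na hlttrans h1 h2
        · rw [hD a b c hab hbc] at h1
          rw [hA a c d habc (fun h => had (habc.trans h))] at h2
          rw [hA a b d hab (fun h => had (hab.trans h))]
          rcases h1 with ⟨x1, _⟩ | ⟨_, x2⟩ | ⟨_, x2⟩
          · exact x1
          · exact absurd h2 (fun g => na _ _ x2 g)
          · exact x2
      · rw [hA a b c hab hbc] at h1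
        by_cases hcd : q c = q d
        · rw [hA a b d hab (fun h => hbc (h.trans hcd.symm))]
          exact h1
        · by_cases had : q a = q d
          · rw [hC a c d had (fun h => hbc (hab.symm.trans h))] at h2
            rw [hD a b d hab (hab.symm.trans had)]
            exact Or.inr (Or.inr ⟨h2, h1⟩)
          · rw [hA a b d hab (fun h => had (hab.trans h))]
            exact h1
    · by_cases hbc : q b = q c
      · rw [hB a b c hbc hab] at h1
        have hac : q a ≠ q c := fun h => hab (h.trans hbc.symm)
        by_cases had : q a = q d
        · rw [hC a c d had hac] at h2
          rw [hC a b d had hab]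
          exact h2
        · by_cases hcd : q c = q d
          · rw [hB a c d hcd hac] at h2
            rw [hB a b d (hbc.trans hcd) hab]
            exact hlttrans _ _ _ h1 h2
          · rw [hE a c d hac hcd had] at h2
            rw [hE a b d hab (fun h => hcd (hbc.symm.trans h)) had, hbc]
            exact h2
      · by_cases hac : q a = q c
        · rw [hC a b c hac hab] at h1
          by_cases had : q a = q d
          · rw [hD a c d hac (hac.symm.trans had)] at h2
            rw [hC a b d had hab]
            rcases h2 with ⟨x1, _⟩ | ⟨_, x2⟩ | ⟨x1, _⟩
            · exact absurd x1 (fun g => na _ _ h1 g)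
            · exact x2
            · exact x1
          · rw [hA a c d hac (fun h => had (hac.trans h))] at h2
            exact absurd h2 (fun g => na _ _ h1 g)
        · rw [hE a b c hab hbc hac] at h1
          by_cases had : q a = q d
          · rw [hC a c d had hac] at h2
            rw [hC a b d had hab]
            exact h2
          · by_cases hcd : q c = q d
            · rw [hE a b d hab (fun h => hbc (h.trans hcd.symm)) had, ← hcd]
              exact h1
            · rw [hE a c d hac hcd had] at h2
              by_cases hbd : q b = q d
              · rw [← hbd] at h2
                exact absurd h2.cyclic_left (sbtw_asymm h1)
              · rw [hE a b d hab hbd had]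
                exact h1.trans_right h2
  · -- totality
    intro a b c nab nbc nca
    by_cases hab : q a = q b
    · by_cases hbc : q b = q c
      · rw [hD a b c hab hbc, hD a c b (hab.trans hbc) hbc.symm]
        unfold cyc3
        rcases hlttotal a b hab with rfl | t1 | t1
        · exact absurd rfl nab
        · rcases hlttotal b c hbc with rfl | t2 | t2
          · exact absurd rfl nbc
          · tauto
          · rcases hlttotal a c (hab.trans hbc) with rfl | t3 | t3
            · exact absurd rfl nca
            · tauto
            · tauto
        · rcases hlttotal b c hbc with rfl | t2 | t2
          · exact absurd rfl nbc
          · rcases hlttotal a c (hab.trans hbc) with rfl | t3 | t3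
            · exact absurd rfl nca
            · tauto
            · tauto
          · tauto
      · rw [hA a b c hab hbc, hC a c b hab (fun h => hbc (hab.symm.trans h))]
        rcases hlttotal a b hab with rfl | h | h
        · exact absurd rfl nab
        · exact Or.inl h
        · exact Or.inr h
    · by_cases hbc : q b = q c
      · have hac : q a ≠ q c := fun h => hab (h.trans hbc.symm)
        rw [hB a b c hbc hab, hB a c b hbc.symm hac]
        rcases hlttotal b c hbc with rfl | h | h
        · exact absurd rfl nbc
        · exact Or.inl h
        · exact Or.inr h
      · by_cases hac : q a = q c
        · rw [hC a b c hac hab, hA a c b hac (fun h => hbc h.symm)]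
          rcases hlttotal a c hac with rfl | h | h
          · exact absurd rfl nca
          · exact Or.inr h
          · exact Or.inl h
        · rw [hE a b c hab hbc hac, hE a c b hac (fun h => hbc h.symm) hab]
          rcases btw_total (q a) (q b) (q c) with h | h
          · left
            refine h.sbtw_of_not_btw (fun h' => ?_)
            rcases h.antisymm h' with e | e | e
            exacts [hab e, hbc e, hac e.symm]
          · right
            have hs : sbtw (q c) (q b) (q a) := by
              refine h.sbtw_of_not_btw (fun h' => ?_)
              rcases h.antisymm h' with e | e | e
              exacts [hbc e.symm, hab e.symm, hac e]
            exact hs.cyclic_left.cyclic_left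
  · -- order preserving
    intro x₁ x₂ x₃ h h12 h23 h31
    exact (hE x₁ x₂ x₃ h12 h23 (fun e => h31 e.symm)).1 h
  · -- fibers convex
    intro y a ha b hb
    simp only [Set.mem_preimage, Set.mem_singleton_iff] at ha hb
    have key : ∀ u v : X, q u = y → q v = y → lt u v →
        ternIcc R u v ⊆ q ⁻¹' {y} := by
      intro u v hu hv huv x hx
      simp only [ternIcc, Set.mem_union, Set.mem_setOf_eq, Set.mem_insert_iff,
        Set.mem_singleton_iff] at hx
      simp only [Set.mem_preimage, Set.mem_singleton_iff]
      rcases hx with hx | rfl | rfl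
      · by_cases hux : q u = q x
        · exact hux.symm.trans hu
        · rw [hC u x v (hu.trans hv.symm) hux] at hx
          exact absurd hx (fun g => na _ _ huv g)
      · exact hu
      · exact hv
    rcases hlttotal a b (ha.trans hb.symm) with rfl | h | h
    · left
      intro x hx
      simp only [ternIcc, Set.mem_union, Set.mem_setOf_eq, Set.mem_insert_iff,
        Set.mem_singleton_iff] at hx
      simp only [Set.mem_preimage, Set.mem_singleton_iff]
      rcases hx with hx | rfl | rfl
      · by_cases hax : q a = q x
        · exact hax.symm.trans ha
        · rw [hC a x a rfl hax] at hx
          exact absurd hx (hirr a)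
      · exact ha
      · exact ha
    · exact Or.inl (key a b ha hb h)
    · exact Or.inr (key b a hb ha h)
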